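/- For any graph G and any threshold k, partitioning the vertices into V_k (the k-core vertex set) and V \ V_k, and computing coreness separately on the induced subgraph G_k and on the induced subgraph G_{!k} augmented with external information, assigns every vertex of G its correct coreness: the merged result map agrees with coreness_G on all of V. -/

import Mathlib

open scoped Classical
open Finset

noncomputable section

variable {V : Type*} [Fintype V]

/-- `S` induces a subgraph of `G` in which every vertex has degree at least `k`. -/
def IsCoreSet (G : SimpleGraph V) (k : ℕ) (S : Finset V) : Prop :=
  ∀ v ∈ S, k ≤ (S.filter (G.Adj v)).card

/-- The vertex set of the `k`-core of `G`: all vertices lying in some induced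
subgraph of minimum degree at least `k`. -/
def coreSet (G : SimpleGraph V) (k : ℕ) : Finset V :=
  Finset.univ.filter fun v => ∃ S : Finset V, IsCoreSet G k S ∧ v ∈ S

/-- The coreness of `v`: the largest `k` such that `v` belongs to the `k`-core. -/
def coreness (G : SimpleGraph V) (v : V) : ℕ :=
  Nat.findGreatest (fun k => v ∈ coreSet G k) (Fintype.card V)

/-- The external information of `v` w.r.t. the `k`-core: the number of
neighbors of `v` that belong to the `k`-core. -/
def extInfo (G : SimpleGraph V) (k : ℕ) (v : V) : ℕ :=
  ((coreSet G k).filter (G.Adj v)).card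

/-- The induced subgraph of `G` on a vertex subset `A` (vertices outside `A`
become isolated). -/
def restrictG (G : SimpleGraph V) (A : Finset V) : SimpleGraph V where
  Adj u w := G.Adj u w ∧ u ∈ A ∧ w ∈ A
  symm := ⟨fun _ _ h => ⟨h.1.symm, h.2.2, h.2.1⟩⟩
  loopless := ⟨fun u h => G.loopless.irrefl u h.1⟩

/-- `S ⊆ A` induces a subgraph in which every vertex `u` has degree plus
external information `E u` at least `s`. -/
def IsAugCoreSet (G : SimpleGraph V) (A : Finset V) (E : V → ℕ) (s : ℕ)
    (S : Finset V) : Prop :=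
  S ⊆ A ∧ ∀ u ∈ S, s ≤ E u + (S.filter (G.Adj u)).card

/-- The augmented coreness of `v` in the part `A`, with external information `E`:
the largest `s` such that `v` lies in an augmented `s`-core. -/
def augCoreness (G : SimpleGraph V) (A : Finset V) (E : V → ℕ) (v : V) : ℕ :=
  Nat.findGreatest (fun s => ∃ S : Finset V, IsAugCoreSet G A E s S ∧ v ∈ S)
    (Fintype.card V + Finset.univ.sup E)

-- L0: core set subsets of coreSet
lemma isCoreSet_subset_coreSet (G : SimpleGraph V) (k : ℕ) {S : Finset V}
    (hS : IsCoreSet G k S) : S ⊆ coreSet G k := by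
  intro u hu
  simp only [coreSet, mem_filter, mem_univ, true_and]
  exact ⟨S, hS, hu⟩

-- L1: coreSet itself is a core set
lemma isCoreSet_coreSet (G : SimpleGraph V) (k : ℕ) : IsCoreSet G k (coreSet G k) := by
  intro v hv
  simp only [coreSet, mem_filter, mem_univ, true_and] at hv
  obtain ⟨S, hS, hvS⟩ := hv
  calc k ≤ (S.filter (G.Adj v)).card := hS v hvS
    _ ≤ ((coreSet G k).filter (G.Adj v)).card :=
      card_le_card (filter_subset_filter _ (isCoreSet_subset_coreSet G k hS))

-- monotone
lemma coreSet_anti (G : SimpleGraph V) {j k : ℕ} (h : j ≤ k) :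
    coreSet G k ⊆ coreSet G j := by
  intro v hv
  simp only [coreSet, mem_filter, mem_univ, true_and] at hv ⊢
  obtain ⟨S, hS, hvS⟩ := hv
  exact ⟨S, fun u hu => le_trans h (hS u hu), hvS⟩

lemma mem_coreSet_le_card (G : SimpleGraph V) {j : ℕ} {v : V}
    (hv : v ∈ coreSet G j) : j ≤ Fintype.card V := by
  have h := isCoreSet_coreSet G j v hv
  have h2 : ((coreSet G j).filter (G.Adj v)).card ≤ Fintype.card V := by
    rw [← card_univ]
    exact card_le_univ _
  exact le_trans h h2

lemma le_coreness_of_mem (G : SimpleGraph V) {j : ℕ} {v : V}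
    (hv : v ∈ coreSet G j) : j ≤ coreness G v :=
  Nat.le_findGreatest (mem_coreSet_le_card G hv) hv

lemma mem_coreSet_coreness (G : SimpleGraph V) (v : V) :
    v ∈ coreSet G (coreness G v) := by
  have h0 : v ∈ coreSet G 0 := by
    simp only [coreSet, mem_filter, mem_univ, true_and]
    exact ⟨{v}, fun u _ => Nat.zero_le _, mem_singleton_self v⟩
  exact Nat.findGreatest_spec (P := fun k => v ∈ coreSet G k) (Nat.zero_le _) h0

lemma coreness_le_iff_mem (G : SimpleGraph V) {j : ℕ} {v : V} (h : j ≤ coreness G v) :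
    v ∈ coreSet G j :=
  coreSet_anti G h (mem_coreSet_coreness G v)

lemma restrict_coreness_eq (G : SimpleGraph V) (k : ℕ) {v : V}
    (hv : v ∈ coreSet G k) :
    coreness (restrictG G (coreSet G k)) v = coreness G v := by
  set C := coreSet G k with hC
  set G' := restrictG G C with hG'
  apply le_antisymm
  · apply Nat.findGreatest_mono (fun j hj => ?_) le_rfl
    simp only [coreSet, mem_filter, mem_univ, true_and] at hj ⊢
    obtain ⟨S, hS, hvS⟩ := hj
    refine ⟨S, fun u hu => le_trans (hS u hu) (card_le_card ?_), hvS⟩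
    exact filter_subset_filter _ (le_refl S) |>.trans
      (by intro w hw; simp only [mem_filter] at hw ⊢; exact ⟨hw.1, hw.2.1⟩)
  · set c := coreness G v with hc
    have hkc : k ≤ c := le_coreness_of_mem G hv
    have hvc : v ∈ coreSet G c := mem_coreSet_coreness G v
    simp only [coreSet, mem_filter, mem_univ, true_and] at hvc
    obtain ⟨S, hS, hvS⟩ := hvc
    have hSC : S ⊆ C := (isCoreSet_subset_coreSet G c hS).trans (coreSet_anti G hkc)
    have hS' : IsCoreSet G' c S := by
      intro u hu
      refine le_trans (hS u hu) (card_le_card ?_)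
      intro w hw
      simp only [mem_filter] at hw ⊢
      exact ⟨hw.1, hw.2, hSC hu, hSC hw.1⟩
    refine Nat.le_findGreatest (Nat.findGreatest_le _) ?_
    simp only [coreSet, mem_filter, mem_univ, true_and]
    exact ⟨S, hS', hvS⟩

lemma aug_coreness_eq (G : SimpleGraph V) (k : ℕ) {v : V}
    (hv : v ∉ coreSet G k) :
    augCoreness G (coreSet G k)ᶜ (extInfo G k) v = coreness G v := by
  set C := coreSet G k with hC
  set c := coreness G v with hc
  apply le_antisymm
  · -- augCoreness ≤ c
    have h0 : ∃ S : Finset V, IsAugCoreSet G Cᶜ (extInfo G k) 0 S ∧ v ∈ S :=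
      ⟨{v}, ⟨singleton_subset_iff.mpr (mem_compl.mpr hv),
        fun u _ => Nat.zero_le _⟩, mem_singleton_self v⟩
    have hspec := Nat.findGreatest_spec
      (P := fun s => ∃ S : Finset V, IsAugCoreSet G Cᶜ (extInfo G k) s S ∧ v ∈ S)
      (n := Fintype.card V + Finset.univ.sup (extInfo G k)) (Nat.zero_le _) h0
    set s := augCoreness G Cᶜ (extInfo G k) v with hs
    obtain ⟨S, ⟨hSA, hSdeg⟩, hvS⟩ := hspec
    set T := S ∪ C with hT
    have hTc : IsCoreSet G (min s k) T := by
      intro u hu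
      rcases mem_union.mp hu with huS | huC
      · have hdisj : Disjoint (C.filter (G.Adj u)) (S.filter (G.Adj u)) := by
          rw [disjoint_left]
          intro w hwC hwS
          exact mem_compl.mp (hSA (mem_filter.mp hwS).1) (mem_filter.mp hwC).1
        have hsub : (C.filter (G.Adj u)) ∪ (S.filter (G.Adj u)) ⊆ T.filter (G.Adj u) :=
          union_subset (filter_subset_filter _ subset_union_right)
            (filter_subset_filter _ subset_union_left)
        calc min s k ≤ s := min_le_left _ _
          _ ≤ extInfo G k u + (S.filter (G.Adj u)).card := hSdeg u huS
          _ = ((C.filter (G.Adj u)) ∪ (S.filter (G.Adj u))).card :=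
              (card_union_of_disjoint hdisj).symm
          _ ≤ (T.filter (G.Adj u)).card := card_le_card hsub
      · calc min s k ≤ k := min_le_right _ _
          _ ≤ (C.filter (G.Adj u)).card := isCoreSet_coreSet G k u huC
          _ ≤ (T.filter (G.Adj u)).card :=
              card_le_card (filter_subset_filter _ subset_union_right)
    have hmem : v ∈ coreSet G (min s k) := by
      simp only [coreSet, mem_filter, mem_univ, true_and]
      exact ⟨T, hTc, mem_union_left _ hvS⟩
    have hmc : min s k ≤ c := le_coreness_of_mem G hmem
    by_cases hsk : s ≤ k
    · rwa [min_eq_left hsk] at hmc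
    · rw [min_eq_right (le_of_not_ge hsk)] at hmc
      exact absurd (coreness_le_iff_mem G hmc) hv
  · -- c ≤ augCoreness
    have hvc : v ∈ coreSet G c := mem_coreSet_coreness G v
    simp only [coreSet, mem_filter, mem_univ, true_and] at hvc
    obtain ⟨S, hS, hvS⟩ := hvc
    refine Nat.le_findGreatest (le_trans (Nat.findGreatest_le _) (Nat.le_add_right _ _)) ?_
    refine ⟨S \ C, ⟨fun u hu => mem_compl.mpr (mem_sdiff.mp hu).2, fun u hu => ?_⟩,
      mem_sdiff.mpr ⟨hvS, hv⟩⟩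
    have hsub : S.filter (G.Adj u) ⊆ (C.filter (G.Adj u)) ∪ ((S \ C).filter (G.Adj u)) := by
      intro w hw
      simp only [mem_filter, mem_union, mem_sdiff] at hw ⊢
      by_cases hwC : w ∈ C
      · exact Or.inl ⟨hwC, hw.2⟩
      · exact Or.inr ⟨⟨hw.1, hwC⟩, hw.2⟩
    calc c ≤ (S.filter (G.Adj u)).card := hS u (mem_sdiff.mp hu).1
      _ ≤ ((C.filter (G.Adj u)) ∪ ((S \ C).filter (G.Adj u))).card := card_le_card hsub
      _ ≤ extInfo G k u + ((S \ C).filter (G.Adj u)).card := card_union_le _ _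

theorem divide_and_conquer_correct (G : SimpleGraph V) (k : ℕ) (result : V → ℕ)
    (h1 : ∀ v ∈ coreSet G k, result v = coreness (restrictG G (coreSet G k)) v)
    (h2 : ∀ v ∉ coreSet G k,
      result v = augCoreness G (coreSet G k)ᶜ (extInfo G k) v) :
    ∀ v : V, result v = coreness G v := by
  intro v
  by_cases hv : v ∈ coreSet G k
  · rw [h1 v hv, restrict_coreness_eq G k hv]
  · rw [h2 v hv, aug_coreness_eq G k hv]

end
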